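/- arXiv:2106.12868 — 4 statements merged into one kernel-verified Lean document; each statement's English description precedes it below -/
import Mathlib

section
/- If K is a Kripke lattice model with all R_a equivalence relations, then in the H-transform H(K), each Π_a(w_X) = I_a(π_a(w_X)) satisfies Generalized Reflexivity: w_X ∈ (Π_a(w_X))↑, where upward closure is taken with respect to the projections r^{W_X}_{W_Y}(w_X) = w_Y. -/
variable {W At : Type}

/-- Downwards: `π(w_X) = w_Y` for some `Y ⊆ X`. -/
def Downwards (π : W × Set At → W × Set At) : Prop :=
  ∀ (w : W) (X : Set At), ∃ Y : Set At, Y ⊆ X ∧ π (w, X) = (w, Y)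

/-- Introspective Idempotence: if `π(w_X) = w_Y`, then every `v_Y` in the information
cell `I(w_Y)` is mapped by `π` to some `u_Y ∈ I(w_Y)`. -/
def IntroIdem (R : W → W → Prop) (π : W × Set At → W × Set At) : Prop :=
  ∀ (w : W) (X Y : Set At), π (w, X) = (w, Y) →
    ∀ v : W, R w v → ∃ u : W, R w u ∧ π (v, Y) = (u, Y)

/-- No Surprises: if `π(w_X) = w_Z` then for all `Y ⊆ X`, `π(w_Y) = w_{Y ∩ Z}`. -/
def NoSurprises (π : W × Set At → W × Set At) : Prop :=
  ∀ (w : W) (X Z : Set At), π (w, X) = (w, Z) →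
    ∀ Y : Set At, Y ⊆ X → π (w, Y) = (w, Y ∩ Z)

/-- The information cell of a world `p = w_Y` of the restriction lattice:
`I(w_Y) = {v_Y : (w_Y, v_Y) ∈ R_Y}` where `(w_Y, v_Y) ∈ R_Y` iff `(w, v) ∈ R`. -/
def Icell (R : W → W → Prop) (p : W × Set At) : Set (W × Set At) :=
  {q | q.2 = p.2 ∧ R p.1 q.1}

/-- The possibility correspondence of the `H`-transform: `Π(w_X) = I(π(w_X))`. -/
def PiH (R : W → W → Prop) (π : W × Set At → W × Set At) (p : W × Set At) :
    Set (W × Set At) :=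
  Icell R (π p)

/-- Upward closure of a set `D` of lattice worlds based in the space `W_Y`
(with projections `r^{W_X}_{W_Y}(w_X) = w_Y`): `D↑ = {u_Z : Y ⊆ Z and u_Y ∈ D}`. -/
def upcl (Y : Set At) (D : Set (W × Set At)) : Set (W × Set At) :=
  {p | Y ⊆ p.2 ∧ (p.1, Y) ∈ D}

/-- If `K` is a Kripke lattice model with `R` an equivalence
relation, then in the `H`-transform `H(K)` each `Π(w_X) = I(π(w_X))` satisfies
Generalized Reflexivity: `w_X ∈ (Π(w_X))↑`, the upward closure being taken with
respect to the projections `r^{W_X}_{W_Y}(w_X) = w_Y` (here `Π(w_X)` is based in the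
space `W_Y` where `π(w_X) = w_Y`). -/
theorem Htransform_genReflexivity (R : W → W → Prop) (π : W × Set At → W × Set At)
    (hD : Downwards π) (hII : IntroIdem R π) (hNS : NoSurprises π)
    (hEq : Equivalence R) :
    ∀ (w : W) (X Y : Set At), π (w, X) = (w, Y) →
      (w, X) ∈ upcl Y (PiH R π (w, X)) := by
  intro w X Y h
  obtain ⟨Y', hY'X, hπ⟩ := hD w X
  have : Y = Y' := by
    have := hπ.symm.trans h
    exact (Prod.mk.injEq _ _ _ _ ▸ this).2.symm
  subst this
  exact ⟨hY'X, by simp [PiH, Icell, h, hEq.refl w]⟩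
end

section
/- If K is a Kripke lattice model with all R_a equivalence relations, then in the H-transform, Π_a satisfies Stationarity: if v ∈ Π_a(w_X) then Π_a(v) = Π_a(w_X). -/
variable {W At : Type}

/-- If `K` is a Kripke lattice model with `R` an equivalence
relation, then in the `H`-transform the possibility correspondence
`Π(w_X) = I(π(w_X))` satisfies Stationarity: if `v ∈ Π(w_X)` then `Π(v) = Π(w_X)`. -/
theorem Htransform_stationarity (R : W → W → Prop) (π : W × Set At → W × Set At)
    (hD : Downwards π) (hII : IntroIdem R π) (hNS : NoSurprises π)
    (hEq : Equivalence R) :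
    ∀ (w : W) (X : Set At) (v : W × Set At), v ∈ PiH R π (w, X) →
      PiH R π v = PiH R π (w, X) := by
  intro w X v hv
  obtain ⟨Y, hYX, hπ⟩ := hD w X
  have hv' : v.2 = Y ∧ R w v.1 := by
    simpa [PiH, Icell, hπ] using hv
  obtain ⟨hv2, hRwv⟩ := hv'
  obtain ⟨u, hRu, hπu⟩ := hII w X Y hπ v.1 hRwv
  obtain ⟨Y', hY'Y, hπv⟩ := hD v.1 Y
  have hu : u = v.1 ∧ Y' = Y := by
    have := hπu.symm.trans hπv
    exact ⟨congrArg Prod.fst this, (congrArg Prod.snd this).symm⟩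
  have hπfix : π (v.1, Y) = (v.1, Y) := by
    rw [hπu, hu.1]
  have hveq : v = (v.1, Y) := by
    ext <;> simp [hv2]
  rw [hveq]
  ext q
  simp only [PiH, Icell, hπfix, hπ, Set.mem_setOf_eq]
  exact and_congr_right fun _ =>
    ⟨fun h => hEq.trans hRwv h, fun h => hEq.trans (hEq.symm hRwv) h⟩
end

section
/- If K is a Kripke lattice model with all R_a equivalence relations, then in the H-transform, Π_a satisfies Projections Preserve Ignorance: if Y ⊆ X then (Π_a(w_X))↑ ⊆ (Π_a(w_Y))↑. -/
variable {W At : Type}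

/-- If `K` is a Kripke lattice model with `R` an equivalence
relation, then in the `H`-transform, `Π` satisfies Projections Preserve Ignorance:
if `Y ⊆ X` then `(Π(w_X))↑ ⊆ (Π(w_Y))↑` (where `Π(w_X) = I(π(w_X))` is based in the
space of `π(w_X)`, and similarly for `w_Y`). -/
theorem Htransform_ppi (R : W → W → Prop) (π : W × Set At → W × Set At)
    (hD : Downwards π) (hII : IntroIdem R π) (hNS : NoSurprises π)
    (hEq : Equivalence R) :
    ∀ (w : W) (X Y : Set At), Y ⊆ X →
      ∀ Zx Zy : Set At, π (w, X) = (w, Zx) → π (w, Y) = (w, Zy) →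
        upcl Zx (PiH R π (w, X)) ⊆ upcl Zy (PiH R π (w, Y)) := by
  intro w X Y hYX Zx Zy hx hy
  have hns := hNS w X Zx hx Y hYX
  have hZy : Zy = Y ∩ Zx := by
    have := hy.symm.trans hns
    exact (Prod.mk.injEq _ _ _ _ ▸ this).2
  intro p hp
  obtain ⟨hsub, hcell⟩ := hp
  refine ⟨?_, ?_⟩
  · rw [hZy]; exact fun a ha => hsub ha.2
  · simp only [PiH, hy, Icell, Set.mem_setOf_eq]
    refine ⟨by trivial, ?_⟩
    simp only [PiH, hx, Icell, Set.mem_setOf_eq] at hcell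
    exact hcell.2
end

section
/- If K is a Kripke lattice model with all R_a equivalence relations, then in the H-transform, Π_a satisfies Projections Preserve Knowledge: if Z ⊆ Y ⊆ X, w_X ∈ W_X and Π_a(w_X) ⊆ W_Y, then the Z-projection of Π_a(w_X) equals Π_a(w_Z). -/
variable {W At : Type}

/-- If `K` is a Kripke lattice model with `R` an equivalence
relation, then in the `H`-transform, `Π` satisfies Projections Preserve Knowledge:
if `Z ⊆ Y ⊆ X` and `Π(w_X) ⊆ W_Y` (i.e. `π(w_X) = w_Y`), then the `Z`-projection
`{x_Z : x_Y ∈ Π(w_X)}` of `Π(w_X)` equals `Π(w_Z)`. -/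
theorem Htransform_ppk (R : W → W → Prop) (π : W × Set At → W × Set At)
    (hD : Downwards π) (hII : IntroIdem R π) (hNS : NoSurprises π)
    (hEq : Equivalence R) :
    ∀ (w : W) (X Y Z : Set At), Z ⊆ Y → Y ⊆ X → π (w, X) = (w, Y) →
      {q : W × Set At | q.2 = Z ∧ (q.1, Y) ∈ PiH R π (w, X)} = PiH R π (w, Z) := by
  intro w X Y Z hZY hYX hπ
  have hπZ : π (w, Z) = (w, Z) := by
    have := hNS w X Y hπ Z (hZY.trans hYX)
    rwa [Set.inter_eq_left.mpr hZY] at this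
  ext q
  simp only [PiH, Icell, hπ, hπZ, Set.mem_setOf_eq]
  tauto
end
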